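/- For s-t graphs H and G, the vertex set V(H) ⊆ V(H ⊘ G) forms an isometric copy of H: for all u, v ∈ V(H), d_{H⊘G}(u, v) = d_H(u, v). -/

import Mathlib

open scoped ENNReal

/-- Cost of a chain (list of vertices): sum of the length function over consecutive pairs. -/
noncomputable def chainCost {α : Type} (len : α → α → ℝ≥0∞) : List α → ℝ≥0∞
  | a :: b :: l => len a b + chainCost len (b :: l)
  | _ => 0
  termination_by l => l.length

/-- A finite weighted multigraph with two distinguished vertices `s` and `t`.
Edge lengths take values in `ℝ≥0∞`. -/
structure STGraph where
  V : Type
  E : Type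
  finV : Fintype V
  finE : Fintype E
  ends : E → V × V
  elen : E → ℝ≥0∞
  s : V
  t : V

attribute [instance] STGraph.finV STGraph.finE

namespace STGraph

/-- The length between two vertices: the infimum of lengths of edges joining them
(`⊤` if there is no such edge). -/
noncomputable def lenFn (G : STGraph) (u v : G.V) : ℝ≥0∞ :=
  ⨅ e : {e : G.E // G.ends e = (u, v) ∨ G.ends e = (v, u)}, G.elen e.1

/-- The shortest-path (extended) distance between two vertices. -/
noncomputable def edist (G : STGraph) (u v : G.V) : ℝ≥0∞ :=
  ⨅ l : {l : List G.V // l.head? = some u ∧ l.getLast? = some v}, chainCost G.lenFn l.1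

/-- `len G` is the distance between the two distinguished vertices. -/
noncomputable def len (G : STGraph) : ℝ≥0∞ := G.edist G.s G.t

/-- An `s`-`t` graph is *proper* if all edge lengths are positive and finite, there are no
self-loops, the graph is connected, and `s ≠ t`. -/
def Proper (G : STGraph) : Prop :=
  (∀ e, 0 < G.elen e ∧ G.elen e < ⊤) ∧
  (∀ e, (G.ends e).1 ≠ (G.ends e).2) ∧
  (∀ u v, G.edist u v ≠ ⊤) ∧ G.s ≠ G.t

/-- The inner (non-terminal) vertices of an `s`-`t` graph. -/
abbrev Inner (G : STGraph) : Type := {v : G.V // v ≠ G.s ∧ v ≠ G.t}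

noncomputable instance (G : STGraph) : Fintype G.Inner := Fintype.ofFinite _

/-- Where a vertex `w` of `G` lands in `H ⊘ G` when the copy of `G` is glued along edge `e` of
`H`: `s(G)` and `t(G)` are identified with the endpoints of `e`. -/
noncomputable def endMap (H G : STGraph) (e : H.E) (w : G.V) : H.V ⊕ (H.E × G.Inner) := by
  classical
  exact if h : w = G.s then Sum.inl (H.ends e).1
    else if h' : w = G.t then Sum.inl (H.ends e).2
    else Sum.inr (e, ⟨w, h, h'⟩)

/-- The composition `H ⊘ G`: every edge of `H` is replaced by a copy of `G`, with lengths in the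
copy along `e` scaled by `len_H(e)/len(G)`. -/
noncomputable def oslash (H G : STGraph) : STGraph where
  V := H.V ⊕ (H.E × G.Inner)
  E := H.E × G.E
  finV := inferInstance
  finE := inferInstance
  ends := fun p => (endMap H G p.1 (G.ends p.2).1, endMap H G p.1 (G.ends p.2).2)
  elen := fun p => H.elen p.1 * G.elen p.2 / G.len
  s := Sum.inl H.s
  t := Sum.inl H.t

/-- A single edge of unit length. -/
noncomputable def unitEdge : STGraph where
  V := Bool
  E := Unit
  finV := inferInstance
  finE := inferInstance
  ends := fun _ => (false, true)
  elen := fun _ => 1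
  s := false
  t := true

/-- Recursive composition: `G^{⊘0}` is a single unit-length edge and
`G^{⊘k} = G^{⊘(k-1)} ⊘ G`. -/
noncomputable def iterOslash (G : STGraph) : ℕ → STGraph
  | 0 => unitEdge
  | k + 1 => oslash (iterOslash G k) G

end STGraph

section ChainLemmas

variable {α β : Type}

lemma chainCost_nil (len : α → α → ℝ≥0∞) : chainCost len [] = 0 := by
  rw [chainCost] <;> simp

lemma chainCost_single (len : α → α → ℝ≥0∞) (a : α) : chainCost len [a] = 0 := by
  rw [chainCost] <;> simp

lemma chainCost_cons (len : α → α → ℝ≥0∞) (a b : α) (l : List α) :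
    chainCost len (a :: b :: l) = len a b + chainCost len (b :: l) := by
  rw [chainCost]

lemma chainCost_map_le (len1 : α → α → ℝ≥0∞) (len2 : β → β → ℝ≥0∞) (φ : α → β) (c : ℝ≥0∞)
    (h : ∀ a b, len2 (φ a) (φ b) ≤ c * len1 a b) :
    ∀ l : List α, chainCost len2 (l.map φ) ≤ c * chainCost len1 l
  | [] => by simp [chainCost_nil]
  | [a] => by simp [chainCost_single]
  | a :: b :: l => by
    rw [List.map_cons, List.map_cons, chainCost_cons, chainCost_cons, mul_add]
    exact add_le_add (h a b) (by
      simpa using chainCost_map_le len1 len2 φ c h (b :: l))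
  termination_by l => l.length

lemma potential_bound (len : α → α → ℝ≥0∞) (f : α → ℝ≥0∞)
    (h : ∀ a b, f b ≤ f a + len a b) :
    ∀ (l : List α) (x y : α), l.head? = some x → l.getLast? = some y →
      f y ≤ f x + chainCost len l
  | [], x, y => by intro hx; simp at hx
  | [a], x, y => by
    intro hx hy
    simp only [List.head?_cons, Option.some.injEq] at hx
    simp only [List.getLast?_singleton, Option.some.injEq] at hy
    subst hx; subst hy
    simp [chainCost_single]
  | a :: b :: l, x, y => by
    intro hx hy
    simp only [List.head?_cons, Option.some.injEq] at hx
    subst hx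
    rw [List.getLast?_cons_cons] at hy
    rw [chainCost_cons, ← add_assoc]
    calc f y ≤ f b + chainCost len (b :: l) :=
          potential_bound len f h (b :: l) b y rfl hy
      _ ≤ (f a + len a b) + chainCost len (b :: l) := add_le_add_left (h a b) _
  termination_by l => l.length

lemma chainCost_splice (len : α → α → ℝ≥0∞) :
    ∀ (l t : List α) (v : α), l.getLast? = some v →
      chainCost len (l ++ t) ≤ chainCost len l + chainCost len (v :: t)
  | [], t, v => by intro h; simp at h
  | [a], t, v => by
    intro h
    simp only [List.getLast?_singleton, Option.some.injEq] at h
    subst h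
    simp [chainCost_single]
  | a :: b :: l, t, v => by
    intro h
    rw [List.getLast?_cons_cons] at h
    rw [List.cons_append, List.cons_append, chainCost_cons, chainCost_cons, add_assoc]
    refine add_le_add_right ?_ _
    simpa using chainCost_splice len (b :: l) t v h
  termination_by l => l.length

lemma chainCost_concat2 (len : α → α → ℝ≥0∞) :
    ∀ (l : List α) (y z : α),
      chainCost len (l ++ [y, z]) = chainCost len (l ++ [y]) + len y z
  | [], y, z => by
    simp [chainCost_cons, chainCost_single, chainCost_nil]
  | [x], y, z => by
    simp [chainCost_cons, chainCost_single, add_assoc]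
  | x :: w :: l, y, z => by
    rw [List.cons_append, List.cons_append, chainCost_cons,
      List.cons_append, List.cons_append, chainCost_cons, add_assoc]
    congr 1
    simpa using chainCost_concat2 len (w :: l) y z
  termination_by l => l.length

lemma chainCost_reverse (len : α → α → ℝ≥0∞) (hs : ∀ a b, len a b = len b a) :
    ∀ l : List α, chainCost len l.reverse = chainCost len l
  | [] => rfl
  | [a] => rfl
  | a :: b :: l => by
    have h1 : (a :: b :: l).reverse = l.reverse ++ [b, a] := by simp
    have h2 : (b :: l).reverse = l.reverse ++ [b] := by simp
    rw [h1, chainCost_concat2, ← h2, chainCost_reverse len hs (b :: l),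
      chainCost_cons, hs b a, add_comm]
  termination_by l => l.length

end ChainLemmas

namespace STGraph

lemma lenFn_symm (G : STGraph) (u v : G.V) : G.lenFn u v = G.lenFn v u := by
  unfold lenFn
  exact le_antisymm (le_iInf fun e => iInf_le (fun e : {e : G.E // G.ends e = (u, v) ∨ G.ends e = (v, u)} => G.elen e.1) ⟨e.1, e.2.symm⟩)
    (le_iInf fun e => iInf_le (fun e : {e : G.E // G.ends e = (v, u) ∨ G.ends e = (u, v)} => G.elen e.1) ⟨e.1, e.2.symm⟩)

lemma edist_le_chainCost (G : STGraph) (u v : G.V) (l : List G.V)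
    (h1 : l.head? = some u) (h2 : l.getLast? = some v) :
    G.edist u v ≤ chainCost G.lenFn l := iInf_le (fun l : {l : List G.V // l.head? = some u ∧ l.getLast? = some v} => chainCost G.lenFn l.1) ⟨l, h1, h2⟩

lemma edist_self (G : STGraph) (u : G.V) : G.edist u u = 0 :=
  le_antisymm (by simpa [chainCost_single] using G.edist_le_chainCost u u [u] rfl rfl)
    (zero_le)

lemma edist_le_lenFn (G : STGraph) (u v : G.V) : G.edist u v ≤ G.lenFn u v := by
  simpa [chainCost_cons, chainCost_single] using
    G.edist_le_chainCost u v [u, v] rfl (by simp)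

lemma edist_symm (G : STGraph) (u v : G.V) : G.edist u v = G.edist v u := by
  have key : ∀ a b : G.V, G.edist a b ≤ G.edist b a := by
    intro a b
    refine le_iInf fun l => ?_
    have h := G.edist_le_chainCost a b l.1.reverse
      (by rw [List.head?_reverse]; exact l.2.2) (by rw [List.getLast?_reverse]; exact l.2.1)
    rwa [chainCost_reverse _ G.lenFn_symm] at h
  exact le_antisymm (key u v) (key v u)

lemma edist_triangle (G : STGraph) (u v w : G.V) :
    G.edist u w ≤ G.edist u v + G.edist v w := by
  have key : ∀ (l1 : {l : List G.V // l.head? = some u ∧ l.getLast? = some v})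
      (l2 : {l : List G.V // l.head? = some v ∧ l.getLast? = some w}),
      G.edist u w ≤ chainCost G.lenFn l1.1 + chainCost G.lenFn l2.1 := by
    rintro ⟨l1, h1u, h1v⟩ ⟨l2, h2v, h2w⟩
    obtain ⟨b, t, rfl⟩ : ∃ b t, l2 = b :: t := by
      cases l2 with
      | nil => simp at h2v
      | cons b t => exact ⟨b, t, rfl⟩
    simp only [List.head?_cons, Option.some.injEq] at h2v
    subst h2v
    have hl1ne : l1 ≠ [] := by rintro rfl; simp at h1u
    refine le_trans (G.edist_le_chainCost u w (l1 ++ t) ?_ ?_) ?_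
    · rw [List.head?_append, h1u]; rfl
    · cases t with
      | nil =>
        simp only [List.append_nil]
        simp only [List.getLast?_singleton, Option.some.injEq] at h2w
        rw [h1v, h2w]
      | cons c t' =>
        rw [List.getLast?_append]
        rw [List.getLast?_cons_cons] at h2w
        rw [h2w]; rfl
    · exact chainCost_splice G.lenFn l1 t b h1v
  calc G.edist u w ≤ ⨅ l1, ⨅ l2, (chainCost G.lenFn l1.1 + chainCost G.lenFn l2.1) :=
        le_iInf fun l1 => le_iInf fun l2 => key l1 l2
    _ = G.edist u v + G.edist v w := by
        rw [edist, edist, ENNReal.iInf_add]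
        exact iInf_congr fun l1 => ENNReal.add_iInf.symm

lemma edist_ne_zero (G : STGraph) (hG : G.Proper) {u v : G.V} (h : u ≠ v) :
    G.edist u v ≠ 0 := by
  set ε : ℝ≥0∞ := ⨅ e : G.E, G.elen e with hε
  have hεpos : 0 < ε := by
    rcases isEmpty_or_nonempty G.E with hE | hE
    · simp [hε, iInf_of_empty]
    · obtain ⟨e0, he0⟩ := Finite.exists_min G.elen
      exact lt_of_lt_of_le (hG.1 e0).1 (le_iInf he0)
  have hstep : ∀ a b : G.V, ε ≤ G.lenFn a b := fun a b =>
    le_iInf fun e => iInf_le _ e.1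
  have hchain : ε ≤ G.edist u v := by
    refine le_iInf fun l => ?_
    obtain ⟨l, hl1, hl2⟩ := l
    match l, hl1, hl2 with
    | [], hl1, hl2 => simp at hl1
    | [a], hl1, hl2 =>
      exfalso
      simp only [List.head?_cons, Option.some.injEq] at hl1
      simp only [List.getLast?_singleton, Option.some.injEq] at hl2
      exact h (hl1.symm.trans hl2)
    | a :: b :: l, hl1, hl2 =>
      rw [chainCost_cons]
      exact le_trans (hstep a b) (le_self_add)
  exact fun h0 => (hεpos.trans_le hchain).ne' h0

lemma len_ne_zero (G : STGraph) (hG : G.Proper) : G.len ≠ 0 :=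
  G.edist_ne_zero hG hG.2.2.2

lemma len_ne_top (G : STGraph) (hG : G.Proper) : G.len ≠ ⊤ :=
  hG.2.2.1 G.s G.t

lemma lenFn_le_elen (G : STGraph) {u v : G.V} {e : G.E}
    (h : G.ends e = (u, v) ∨ G.ends e = (v, u)) : G.lenFn u v ≤ G.elen e :=
  iInf_le (fun e : {e : G.E // G.ends e = (u, v) ∨ G.ends e = (v, u)} => G.elen e.1) ⟨e, h⟩

/-- Branch potential used to project distances in `H ⊘ G` back to `H`. -/
noncomputable def branchF (H G : STGraph) (u : H.V) (e : H.E) (w : G.V) : ℝ≥0∞ :=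
  min (H.edist u (H.ends e).1 + H.elen e * G.edist G.s w / G.len)
      (H.edist u (H.ends e).2 + H.elen e * G.edist G.t w / G.len)

/-- Potential function on the vertices of `H ⊘ G` measuring distance from `u : H.V`. -/
noncomputable def pot (H G : STGraph) (u : H.V) : H.V ⊕ (H.E × G.Inner) → ℝ≥0∞
  | Sum.inl a => H.edist u a
  | Sum.inr (e, w) => branchF H G u e w.1

end STGraph

namespace STGraph

lemma pot_endMap (H G : STGraph) (hG : G.Proper) (u : H.V) (e : H.E) (w : G.V) :
    pot H G u (endMap H G e w) = branchF H G u e w := by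
  have hlen0 := G.len_ne_zero hG
  have hlent := G.len_ne_top hG
  by_cases hs : w = G.s
  · subst hs
    have h1 : endMap H G e G.s = Sum.inl (H.ends e).1 := by simp [endMap]
    rw [h1]
    show H.edist u (H.ends e).1 = _
    unfold branchF
    rw [G.edist_self, mul_zero, ENNReal.zero_div, add_zero,
      show G.edist G.t G.s = G.len from G.edist_symm G.t G.s,
      mul_div_assoc, ENNReal.div_self hlen0 hlent, mul_one]
    refine (min_eq_left ?_).symm
    refine le_trans (H.edist_triangle u (H.ends e).2 (H.ends e).1) ?_
    exact add_le_add_right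
      (le_trans (H.edist_le_lenFn _ _) (H.lenFn_le_elen (Or.inr rfl))) _
  · by_cases ht : w = G.t
    · subst ht
      have h1 : endMap H G e G.t = Sum.inl (H.ends e).2 := by simp [endMap, hs]
      rw [h1]
      show H.edist u (H.ends e).2 = _
      unfold branchF
      rw [G.edist_self, mul_zero, ENNReal.zero_div, add_zero,
        show G.edist G.s G.t = G.len from rfl,
        mul_div_assoc, ENNReal.div_self hlen0 hlent, mul_one]
      refine (min_eq_right ?_).symm
      refine le_trans (H.edist_triangle u (H.ends e).1 (H.ends e).2) ?_
      exact add_le_add_right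
        (le_trans (H.edist_le_lenFn _ _) (H.lenFn_le_elen (Or.inl rfl))) _
    · have h1 : endMap H G e w = Sum.inr (e, ⟨w, hs, ht⟩) := by simp [endMap, hs, ht]
      rw [h1]
      rfl

lemma branchF_lipschitz (H G : STGraph) (u : H.V) (e : H.E) (w1 w2 : G.V) :
    branchF H G u e w2 ≤ branchF H G u e w1 + H.elen e * G.lenFn w1 w2 / G.len := by
  have key : ∀ (x : G.V) (d : ℝ≥0∞),
      d + H.elen e * G.edist x w2 / G.len
        ≤ (d + H.elen e * G.edist x w1 / G.len) + H.elen e * G.lenFn w1 w2 / G.len := by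
    intro x d
    rw [add_assoc]
    refine add_le_add_right ?_ d
    rw [← ENNReal.add_div, ← mul_add]
    refine ENNReal.div_le_div_right (mul_le_mul_right ?_ _) _
    exact le_trans (G.edist_triangle x w1 w2) (add_le_add_right (G.edist_le_lenFn w1 w2) _)
  show branchF H G u e w2 ≤ min _ _ + _
  rw [← min_add_add_right]
  exact le_min (le_trans (min_le_left _ _) (key G.s _))
    (le_trans (min_le_right _ _) (key G.t _))

lemma pot_lipschitz (H G : STGraph) (hG : G.Proper) (u : H.V)
    (x y : (oslash H G).V) :
    pot H G u y ≤ pot H G u x + (oslash H G).lenFn x y := by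
  rw [lenFn, ENNReal.add_iInf]
  refine le_iInf fun E => ?_
  obtain ⟨⟨e, g⟩, hE⟩ := E
  have helen : (oslash H G).elen (e, g) = H.elen e * G.elen g / G.len := rfl
  rw [helen]
  have hends : (oslash H G).ends (e, g)
      = (endMap H G e (G.ends g).1, endMap H G e (G.ends g).2) := rfl
  rcases hE with hE | hE
  · rw [hends] at hE; replace hE := Prod.mk.inj hE
    obtain ⟨hx, hy⟩ := hE
    subst hx; subst hy
    rw [pot_endMap H G hG, pot_endMap H G hG]
    refine le_trans (branchF_lipschitz H G u e (G.ends g).1 (G.ends g).2) ?_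
    refine add_le_add_right (ENNReal.div_le_div_right (mul_le_mul_right ?_ _) _) _
    exact G.lenFn_le_elen (Or.inl rfl)
  · rw [hends] at hE; replace hE := Prod.mk.inj hE
    obtain ⟨hy, hx⟩ := hE
    subst hx; subst hy
    rw [pot_endMap H G hG, pot_endMap H G hG]
    refine le_trans (branchF_lipschitz H G u e (G.ends g).2 (G.ends g).1) ?_
    refine add_le_add_right (ENNReal.div_le_div_right (mul_le_mul_right ?_ _) _) _
    exact G.lenFn_le_elen (Or.inr rfl)

lemma edge_bound (H G : STGraph) (hH : H.Proper) (hG : G.Proper) (e : H.E) :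
    (oslash H G).edist (Sum.inl (H.ends e).1) (Sum.inl (H.ends e).2) ≤ H.elen e := by
  have hlen0 := G.len_ne_zero hG
  have hlent := G.len_ne_top hG
  set c := H.elen e / G.len with hc
  have hc0 : c ≠ 0 := by
    rw [hc, Ne, ENNReal.div_eq_zero_iff]
    push_neg
    exact ⟨(hH.1 e).1.ne', hlent⟩
  have hct : c ≠ ⊤ := by
    rw [hc]
    exact (ENNReal.div_lt_top (hH.1 e).2.ne hlen0).ne
  set φ := endMap H G e with hφ
  have hpair : ∀ w1 w2 : G.V, (oslash H G).lenFn (φ w1) (φ w2) ≤ c * G.lenFn w1 w2 := by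
    intro w1 w2
    refine le_trans (le_iInf fun g : {g : G.E // G.ends g = (w1, w2) ∨ G.ends g = (w2, w1)} =>
      ?_) (ENNReal.mul_iInf_of_ne hc0 hct).ge
    have helen : (oslash H G).elen (e, g.1) = c * G.elen g.1 := by
      show H.elen e * G.elen g.1 / G.len = _
      rw [hc, div_eq_mul_inv, div_eq_mul_inv, mul_right_comm]
    refine le_trans (iInf_le _ ⟨(e, g.1), ?_⟩) helen.le
    rcases g.2 with h | h
    · exact Or.inl (by show (φ (G.ends g.1).1, φ (G.ends g.1).2) = _; rw [h]; rfl)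
    · exact Or.inr (by show (φ (G.ends g.1).1, φ (G.ends g.1).2) = _; rw [h]; rfl)
  have hφs : φ G.s = Sum.inl (H.ends e).1 := by simp [hφ, endMap]
  have hφt : φ G.t = Sum.inl (H.ends e).2 := by
    have : G.t ≠ G.s := hG.2.2.2.symm
    simp [hφ, endMap, this]
  have key : ∀ l : {l : List G.V // l.head? = some G.s ∧ l.getLast? = some G.t},
      (oslash H G).edist (Sum.inl (H.ends e).1) (Sum.inl (H.ends e).2)
        ≤ c * chainCost G.lenFn l.1 := by
    intro l
    refine le_trans ((oslash H G).edist_le_chainCost _ _ (l.1.map φ) ?_ ?_) ?_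
    · show (l.1.map φ).head? = some (Sum.inl (H.ends e).1 : H.V ⊕ (H.E × G.Inner))
      rw [List.head?_map, l.2.1, Option.map_some, hφs]
    · show (l.1.map φ).getLast? = some (Sum.inl (H.ends e).2 : H.V ⊕ (H.E × G.Inner))
      rw [List.getLast?_map, l.2.2, Option.map_some, hφt]
    · exact chainCost_map_le G.lenFn (oslash H G).lenFn φ c hpair l.1
  calc (oslash H G).edist (Sum.inl (H.ends e).1) (Sum.inl (H.ends e).2)
      ≤ ⨅ l : {l : List G.V // l.head? = some G.s ∧ l.getLast? = some G.t},
          c * chainCost G.lenFn l.1 := le_iInf key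
    _ = c * G.len := by rw [← ENNReal.mul_iInf_of_ne hc0 hct]; rfl
    _ = H.elen e := ENNReal.div_mul_cancel hlen0 hlent

lemma step_bound (H G : STGraph) (hH : H.Proper) (hG : G.Proper) (a b : H.V) :
    (oslash H G).edist (Sum.inl a) (Sum.inl b) ≤ H.lenFn a b := by
  refine le_iInf fun e => ?_
  rcases e.2 with h | h
  · have h2 := edge_bound H G hH hG e.1
    rw [h] at h2
    exact h2
  · have h2 := edge_bound H G hH hG e.1
    rw [h] at h2
    refine ((oslash H G).edist_symm _ _).trans_le ?_
    exact h2

end STGraph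


open STGraph in
/-- The vertex set `V(H) ⊆ V(H ⊘ G)` forms an isometric copy of `H`: for all `u, v ∈ V(H)`,
`d_{H⊘G}(u, v) = d_H(u, v)`. -/
theorem oslash_isometric_copy (H G : STGraph) (hH : H.Proper) (hG : G.Proper)
    (u v : H.V) :
    (oslash H G).edist (Sum.inl u) (Sum.inl v) = H.edist u v := by
  refine le_antisymm ?_ ?_
  · refine le_iInf fun l => ?_
    have hg : ∀ a b : H.V, (oslash H G).edist (Sum.inl u) (Sum.inl b)
        ≤ (oslash H G).edist (Sum.inl u) (Sum.inl a) + H.lenFn a b := fun a b =>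
      le_trans ((oslash H G).edist_triangle _ _ _)
        (add_le_add_right (step_bound H G hH hG a b) _)
    have h := potential_bound H.lenFn
      (fun a => (oslash H G).edist (Sum.inl u) (Sum.inl a)) hg l.1 u v l.2.1 l.2.2
    exact h.trans ((congrArg (· + chainCost H.lenFn l.1) ((oslash H G).edist_self _)).trans (zero_add _)).le
  · refine le_iInf fun l => ?_
    have h := potential_bound (oslash H G).lenFn (pot H G u)
      (pot_lipschitz H G hG u) l.1 (Sum.inl u) (Sum.inl v) l.2.1 l.2.2
    simpa [pot, H.edist_self] using h
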